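/- For every point x ∈ ℝ¹³⁵ = (ℝ⁵)²⁷, there exist real numbers λ¹, …, λ²⁷, λ²⁸, λ²⁹ such that the Lagrange 1-form Σᵢ dGᵢ + Σᵢ λⁱ ωᵢ + λ²⁸ Σᵢ dEᵢ + λ²⁹ Σᵢ dQᵢ vanishes at x (as a linear functional on ℝ¹³⁵) if and only if I₁(x) = ⋯ = I₂₇(x) and P₁(x) = ⋯ = P₂₇(x). -/
import Mathlib


/- The product economy ℝ¹³⁵ = (ℝ⁵)²⁷ is modeled as `Fin 27 → Fin 5 → ℝ`;
   within each factor, index 0 = G, 1 = I, 2 = E, 3 = P, 4 = Q. -/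

/-- Gibbs–Pfaff covector of the `i`-th economy at the point `x`:
`ωᵢ = dGᵢ − Iᵢ(x) dEᵢ + Pᵢ(x) dQᵢ`, a linear functional on ℝ¹³⁵. -/
noncomputable def ω (x : Fin 27 → Fin 5 → ℝ) (i : Fin 27) :
    (Fin 27 → Fin 5 → ℝ) → ℝ :=
  fun v => v i 0 - x i 1 * v i 2 + x i 3 * v i 4

/-- basis vector supported at `(i,k)` -/
def ee (i : Fin 27) (k : Fin 5) : Fin 27 → Fin 5 → ℝ :=
  fun j l => if j = i ∧ l = k then 1 else 0

/-- For every `x ∈ ℝ¹³⁵`, there exist multipliers `λ¹, …, λ²⁷, λ²⁸, λ²⁹` making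
the Lagrange 1-form `Σᵢ dGᵢ + Σᵢ λⁱ ωᵢ + λ²⁸ Σᵢ dEᵢ + λ²⁹ Σᵢ dQᵢ` vanish at `x`
if and only if `I₁(x) = ⋯ = I₂₇(x)` and `P₁(x) = ⋯ = P₂₇(x)`. -/
theorem eu_balance_total_increase (x : Fin 27 → Fin 5 → ℝ) :
    (∃ (lam : Fin 27 → ℝ) (lam28 lam29 : ℝ), ∀ v : Fin 27 → Fin 5 → ℝ,
        (∑ i, v i 0) + (∑ i, lam i * ω x i v)
          + lam28 * (∑ i, v i 2) + lam29 * (∑ i, v i 4) = 0) ↔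
    ((∀ i j : Fin 27, x i 1 = x j 1) ∧ (∀ i j : Fin 27, x i 3 = x j 3)) := by
  constructor
  · rintro ⟨lam, lam28, lam29, h⟩
    have hlam : ∀ i, lam i = -1 := by
      intro i
      have := h (ee i 0)
      simp only [ω, ee] at this
      simp [Finset.sum_ite_eq', show ((2:Fin 5) = 0) = False from by decide, show ((4:Fin 5) = 0) = False from by decide, show ((0:Fin 5) = 2) = False from by decide, show ((4:Fin 5) = 2) = False from by decide, show ((0:Fin 5) = 4) = False from by decide, show ((2:Fin 5) = 4) = False from by decide] at this
      linarith
    have hI : ∀ i, x i 1 = -lam28 := by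
      intro i
      have := h (ee i 2)
      simp only [ω, ee, hlam] at this
      simp [Finset.sum_ite_eq', show ((2:Fin 5) = 0) = False from by decide, show ((4:Fin 5) = 0) = False from by decide, show ((0:Fin 5) = 2) = False from by decide, show ((4:Fin 5) = 2) = False from by decide, show ((0:Fin 5) = 4) = False from by decide, show ((2:Fin 5) = 4) = False from by decide] at this
      linarith
    have hP : ∀ i, x i 3 = lam29 := by
      intro i
      have := h (ee i 4)
      simp only [ω, ee, hlam] at this
      simp [Finset.sum_ite_eq', show ((2:Fin 5) = 0) = False from by decide, show ((4:Fin 5) = 0) = False from by decide, show ((0:Fin 5) = 2) = False from by decide, show ((4:Fin 5) = 2) = False from by decide, show ((0:Fin 5) = 4) = False from by decide, show ((2:Fin 5) = 4) = False from by decide] at this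
      linarith
    exact ⟨fun i j => by rw [hI i, hI j], fun i j => by rw [hP i, hP j]⟩
  · rintro ⟨hI, hP⟩
    refine ⟨fun _ => -1, -(x 0 1), x 0 3, fun v => ?_⟩
    have : ∀ i : Fin 27, (-1 : ℝ) * ω x i v
        = -(v i 0) + x 0 1 * v i 2 - x 0 3 * v i 4 := by
      intro i
      simp only [ω, hI i 0, hP i 0]
      ring
    rw [Finset.sum_congr rfl (fun i _ => this i)]
    simp only [Finset.sum_add_distrib, Finset.sum_sub_distrib, Finset.sum_neg_distrib,
      ← Finset.mul_sum]
    ring
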